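/- (Kochen–Stone) Let (Ω, μ) be a probability space and (B_n) a sequence of measurable subsets with Σ_n μ(B_n) = ∞. Suppose there is C > 0 such that for every N, Σ_{n₁=0}^{N} Σ_{n₂=0}^{N} μ(B_{n₁} ∩ B_{n₂}) ≤ C (Σ_{n=0}^{N} μ(B_n))². Then μ(limsup_n B_n) ≥ 1/C. -/

import Mathlib

open MeasureTheory ENNReal

lemma chung_erdos_aux {Ω : Type*} [MeasurableSpace Ω] (μ : Measure Ω)
    (B : ℕ → Set Ω) (hmeas : ∀ n, MeasurableSet (B n)) (s : Finset ℕ) :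
    (∑ n ∈ s, μ (B n)) ^ 2 ≤
      (∑ i ∈ s, ∑ j ∈ s, μ (B i ∩ B j)) * μ (⋃ n ∈ s, B n) := by
  set f : Ω → ℝ≥0∞ := fun ω => ∑ n ∈ s, (B n).indicator 1 ω with hf
  set U : Set Ω := ⋃ n ∈ s, B n with hU
  have hUm : MeasurableSet U := MeasurableSet.biUnion s.countable_toSet fun n _ => hmeas n
  have hfm : Measurable f := by
    apply Finset.measurable_sum
    intro n _
    exact measurable_const.indicator (hmeas n)
  have h1 : ∫⁻ ω, f ω ∂μ = ∑ n ∈ s, μ (B n) := by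
    simp only [hf]
    rw [lintegral_finset_sum (f := fun n => (B n).indicator 1) _ fun n _ => measurable_one.indicator (hmeas n)]
    simp [lintegral_indicator_one (hmeas _)]
  have h2 : ∫⁻ ω, f ω ^ 2 ∂μ = ∑ i ∈ s, ∑ j ∈ s, μ (B i ∩ B j) := by
    have heq : ∀ ω, f ω ^ 2 = ∑ i ∈ s, ∑ j ∈ s, (B i ∩ B j).indicator (1 : Ω → ℝ≥0∞) ω := by
      intro ω
      rw [hf, sq, Finset.sum_mul_sum]
      refine Finset.sum_congr rfl fun i _ => Finset.sum_congr rfl fun j _ => ?_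
      rw [← Set.inter_indicator_mul]
      congr 1
      funext x
      simp
    simp only [heq]
    rw [lintegral_finset_sum (f := fun i ω => ∑ j ∈ s, (B i ∩ B j).indicator 1 ω) _
      fun i _ => Finset.measurable_sum _
      fun j _ => measurable_const.indicator ((hmeas i).inter (hmeas j))]
    refine Finset.sum_congr rfl fun i _ => ?_
    rw [lintegral_finset_sum (f := fun j => (B i ∩ B j).indicator 1) _ fun j _ => measurable_one.indicator ((hmeas i).inter (hmeas j))]
    simp [lintegral_indicator_one ((hmeas _).inter (hmeas _))]
  have hfU : ∀ ω, f ω = f ω * U.indicator 1 ω := by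
    intro ω
    by_cases h : ω ∈ U
    · simp [h]
    · have : f ω = 0 := by
        rw [hf]
        refine Finset.sum_eq_zero fun n hn => ?_
        have : ω ∉ B n := fun hω => h (Set.mem_biUnion hn hω)
        simp [this]
      simp [this]
  have hcs : ∫⁻ ω, f ω ∂μ ≤
      (∫⁻ ω, f ω ^ (2:ℝ) ∂μ) ^ (1/(2:ℝ)) *
        (∫⁻ ω, (U.indicator (1 : Ω → ℝ≥0∞) ω) ^ (2:ℝ) ∂μ) ^ (1/(2:ℝ)) := by
    calc ∫⁻ ω, f ω ∂μ = ∫⁻ ω, f ω * U.indicator 1 ω ∂μ := lintegral_congr hfU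
      _ ≤ _ := ENNReal.lintegral_mul_le_Lp_mul_Lq μ ⟨by norm_num, by norm_num, by norm_num⟩
          hfm.aemeasurable (measurable_const.indicator hUm).aemeasurable
  have hind : ∫⁻ ω, (U.indicator (1 : Ω → ℝ≥0∞) ω) ^ (2:ℝ) ∂μ = μ U := by
    have heq : ∀ ω, (U.indicator (1 : Ω → ℝ≥0∞) ω) ^ (2:ℝ) = U.indicator 1 ω := by
      intro ω
      by_cases h : ω ∈ U <;> simp [h]
    simp only [heq]
    exact lintegral_indicator_one hUm
  have hpow : ∫⁻ ω, f ω ^ (2:ℝ) ∂μ = ∫⁻ ω, f ω ^ 2 ∂μ := by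
    refine lintegral_congr fun ω => ?_
    rw [← ENNReal.rpow_natCast (f ω) 2]
    norm_num
  have hsq : ∀ a : ℝ≥0∞, (a ^ (1/(2:ℝ))) ^ 2 = a := fun a => by
    rw [← ENNReal.rpow_natCast (a ^ (1/(2:ℝ))) 2, ← ENNReal.rpow_mul]
    norm_num
  rw [← h1, ← h2]
  calc (∫⁻ ω, f ω ∂μ) ^ 2
      ≤ ((∫⁻ ω, f ω ^ (2:ℝ) ∂μ) ^ (1/(2:ℝ)) *
          (∫⁻ ω, (U.indicator (1 : Ω → ℝ≥0∞) ω) ^ (2:ℝ) ∂μ) ^ (1/(2:ℝ))) ^ 2 :=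
        pow_le_pow_left' hcs 2
    _ = (∫⁻ ω, f ω ^ (2:ℝ) ∂μ) * (∫⁻ ω, (U.indicator (1 : Ω → ℝ≥0∞) ω) ^ (2:ℝ) ∂μ) := by
        rw [mul_pow, hsq, hsq]
    _ = (∫⁻ ω, f ω ^ 2 ∂μ) * μ U := by rw [hind, hpow]

open MeasureTheory ENNReal

/-- Kochen–Stone theorem: a quantitative second Borel–Cantelli lemma. -/
theorem kochen_stone {Ω : Type*} [MeasurableSpace Ω] (μ : Measure Ω)
    [IsProbabilityMeasure μ] (B : ℕ → Set Ω) (hmeas : ∀ n, MeasurableSet (B n))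
    (hdiv : ∑' n : ℕ, μ (B n) = ⊤)
    (C : ℝ) (hC : 0 < C)
    (hbound : ∀ N : ℕ,
      ∑ n₁ ∈ Finset.range (N + 1), ∑ n₂ ∈ Finset.range (N + 1), μ (B n₁ ∩ B n₂) ≤
        ENNReal.ofReal C * (∑ n ∈ Finset.range (N + 1), μ (B n)) ^ 2) :
    ENNReal.ofReal (1 / C) ≤ μ (⋂ N : ℕ, ⋃ n : ℕ, ⋃ _ : N ≤ n, B n) := by
  set U : ℕ → Set Ω := fun N => ⋃ n : ℕ, ⋃ _ : N ≤ n, B n with hUdef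
  have hUm : ∀ N, MeasurableSet (U N) :=
    fun N => MeasurableSet.iUnion fun n => MeasurableSet.iUnion fun _ => hmeas n
  -- partial sums
  set T : ℕ → ℝ≥0∞ := fun M => ∑ n ∈ Finset.range (M + 1), μ (B n) with hTdef
  have hTne : ∀ M, T M ≠ ⊤ := fun M =>
    (ENNReal.sum_lt_top.2 fun n _ => measure_lt_top μ (B n)).ne
  set t : ℕ → ℝ := fun M => (T M).toReal with htdef
  -- key ENNReal inequality
  have hkey : ∀ N M : ℕ, N ≤ M →
      (∑ n ∈ Finset.Ico N (M + 1), μ (B n)) ^ 2 ≤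
        ENNReal.ofReal C * T M ^ 2 * μ (U N) := by
    intro N M hNM
    have h1 := chung_erdos_aux μ B hmeas (Finset.Ico N (M + 1))
    have hsub : (⋃ n ∈ Finset.Ico N (M + 1), B n) ⊆ U N := by
      refine Set.iUnion₂_subset fun n hn => ?_
      exact Set.subset_iUnion₂ (s := fun i (_ : N ≤ i) => B i) n (Finset.mem_Ico.1 hn).1
    have h2 : ∑ i ∈ Finset.Ico N (M + 1), ∑ j ∈ Finset.Ico N (M + 1), μ (B i ∩ B j) ≤
        ∑ i ∈ Finset.range (M + 1), ∑ j ∈ Finset.range (M + 1), μ (B i ∩ B j) := by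
      have hss : Finset.Ico N (M + 1) ⊆ Finset.range (M + 1) := by
        intro x hx
        exact Finset.mem_range.2 (Finset.mem_Ico.1 hx).2
      calc ∑ i ∈ Finset.Ico N (M + 1), ∑ j ∈ Finset.Ico N (M + 1), μ (B i ∩ B j)
          ≤ ∑ i ∈ Finset.Ico N (M + 1), ∑ j ∈ Finset.range (M + 1), μ (B i ∩ B j) :=
            Finset.sum_le_sum fun i _ => Finset.sum_le_sum_of_subset hss
        _ ≤ _ := Finset.sum_le_sum_of_subset hss
    calc (∑ n ∈ Finset.Ico N (M + 1), μ (B n)) ^ 2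
        ≤ (∑ i ∈ Finset.Ico N (M + 1), ∑ j ∈ Finset.Ico N (M + 1), μ (B i ∩ B j)) *
            μ (⋃ n ∈ Finset.Ico N (M + 1), B n) := h1
      _ ≤ (ENNReal.ofReal C * T M ^ 2) * μ (U N) :=
          mul_le_mul' (h2.trans (hbound M)) (measure_mono hsub)
  -- unboundedness of t
  have hunb : ∀ (N : ℕ) (K : ℝ), ∃ M, N ≤ M ∧ K ≤ t M := by
    intro N K
    have h1 : (⊤ : ℝ≥0∞) = ⨆ n, ∑ i ∈ Finset.range n, μ (B i) := by
      rw [← hdiv]; exact ENNReal.tsum_eq_iSup_nat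
    have h2 : ENNReal.ofReal (max K 0) < ⨆ n, ∑ i ∈ Finset.range n, μ (B i) := by
      rw [← h1]; exact ENNReal.ofReal_lt_top
    obtain ⟨n, hn⟩ := lt_iSup_iff.1 h2
    refine ⟨max n N, le_max_right _ _, ?_⟩
    have h3 : ENNReal.ofReal (max K 0) < T (max n N) := by
      refine hn.trans_le ?_
      apply Finset.sum_le_sum_of_subset
      intro x hx
      simp only [Finset.mem_range] at hx ⊢
      omega
    have := (ENNReal.ofReal_lt_iff_lt_toReal (le_max_right K 0) (hTne _)).1 h3
    exact (le_max_left K 0).trans this.le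
  -- per-N bound
  have hN : ∀ N : ℕ, ENNReal.ofReal (1 / C) ≤ μ (U N) := by
    intro N
    set P : ℝ≥0∞ := ∑ n ∈ Finset.range N, μ (B n) with hPdef
    have hPne : P ≠ ⊤ := (ENNReal.sum_lt_top.2 fun n _ => measure_lt_top μ (B n)).ne
    set p : ℝ := P.toReal with hpdef
    set u : ℝ := (μ (U N)).toReal with hudef
    have hu0 : 0 ≤ u := ENNReal.toReal_nonneg
    have hreal : ∀ M, N ≤ M → (t M - p) ^ 2 ≤ C * t M ^ 2 * u := by
      intro M hNM
      set S : ℝ≥0∞ := ∑ n ∈ Finset.Ico N (M + 1), μ (B n) with hSdef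
      have hSne : S ≠ ⊤ := (ENNReal.sum_lt_top.2 fun n _ => measure_lt_top μ (B n)).ne
      have hsplit : P + S = T M := Finset.sum_range_add_sum_Ico _ (by omega)
      have hts : t M = p + S.toReal := by
        show (T M).toReal = p + S.toReal
        rw [← hsplit, ENNReal.toReal_add hPne hSne]
      have h1 := hkey N M hNM
      have hRne : ENNReal.ofReal C * T M ^ 2 * μ (U N) ≠ ⊤ := by
        apply ENNReal.mul_ne_top
        apply ENNReal.mul_ne_top ENNReal.ofReal_ne_top
        · exact (pow_ne_top (hTne M))
        · exact (measure_lt_top μ _).ne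
      have h2 := ENNReal.toReal_mono hRne h1
      rw [ENNReal.toReal_pow, ENNReal.toReal_mul, ENNReal.toReal_mul,
        ENNReal.toReal_pow, ENNReal.toReal_ofReal hC.le] at h2
      have : S.toReal = t M - p := by rw [hts]; ring
      rw [this] at h2
      exact h2
    have hCu : 1 ≤ C * u := by
      have hstep : ∀ k : ℕ, (1 - 1 / (k + 1) : ℝ) ^ 2 ≤ C * u := by
        intro k
        set ε : ℝ := 1 / (k + 1 : ℝ) with hε
        have hε0 : 0 < ε := by positivity
        have hε1 : ε ≤ 1 := by
          rw [hε, div_le_one (by positivity)]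
          linarith [Nat.cast_nonneg (α := ℝ) k]
        obtain ⟨M, hNM, hM⟩ := hunb N (max (p / ε) 1)
        have htpos : (0:ℝ) < t M := lt_of_lt_of_le one_pos ((le_max_right _ _).trans hM)
        have hpε : p ≤ ε * t M := by
          have : p / ε ≤ t M := (le_max_left _ _).trans hM
          calc p = (p / ε) * ε := by field_simp
            _ ≤ t M * ε := by nlinarith
            _ = ε * t M := mul_comm _ _
        have h3 : (1 - ε) * t M ≤ t M - p := by nlinarith
        have h4 : 0 ≤ (1 - ε) * t M := by nlinarith
        have h5 : ((1 - ε) * t M) ^ 2 ≤ (t M - p) ^ 2 := by nlinarith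
        have h6 := (h5.trans (hreal M hNM))
        have h7 : (1 - ε) ^ 2 * t M ^ 2 ≤ C * u * t M ^ 2 := by nlinarith
        have ht2 : (0:ℝ) < t M ^ 2 := by positivity
        exact le_of_mul_le_mul_right (by linarith [h7]) ht2
      have hlim : Filter.Tendsto (fun k : ℕ => (1 - 1 / (k + 1) : ℝ) ^ 2)
          Filter.atTop (nhds 1) := by
        have h0 : Filter.Tendsto (fun k : ℕ => (1 / (k + 1) : ℝ))
            Filter.atTop (nhds 0) := tendsto_one_div_add_atTop_nhds_zero_nat
        have := ((tendsto_const_nhds (x := (1:ℝ))).sub h0).pow 2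
        simpa using this
      exact le_of_tendsto' hlim hstep
    have hu : 1 / C ≤ u := by
      rw [div_le_iff₀ hC] at *
      nlinarith
    calc ENNReal.ofReal (1 / C) ≤ ENNReal.ofReal u := ENNReal.ofReal_le_ofReal hu
      _ = μ (U N) := ENNReal.ofReal_toReal (measure_lt_top μ _).ne
  -- conclude by continuity from above
  have hanti : Antitone U := by
    intro N N' h
    exact Set.iUnion₂_subset fun n hn => Set.subset_iUnion₂ (s := fun i (_ : N ≤ i) => B i) n (h.trans hn)
  rw [show (⋂ N : ℕ, ⋃ n : ℕ, ⋃ _ : N ≤ n, B n) = ⋂ N, U N from rfl,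
    hanti.measure_iInter (fun N => (hUm N).nullMeasurableSet)
      ⟨0, (measure_lt_top μ _).ne⟩]
  exact le_iInf hN
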